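/- Non-adjacent one-step mutated quantum cluster variables q-commute: for every i ≥ 1 and every integer k with 1 < k ≤ n − i, one has X'_i X'_{i+k} = q^{(−1)^{k−1}} X'_{i+k} X'_i. -/
import Mathlib


/-- The skew-symmetric matrix `Λ` (indexed by `1, …, n`) compatible with the incidence
matrix of the linearly oriented type `A` Dynkin quiver: `Λ i j = 1` if `i` is odd, `j` is
even and `i < j`; `Λ i j = -1` if `i` is even, `j` is odd and `i > j`; `Λ i j = 0`
otherwise. -/
def lamA (i j : ℕ) : ℤ :=
  if Odd i ∧ Even j ∧ i < j then 1
  else if Even i ∧ Odd j ∧ j < i then -1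
  else 0

lemma lamA_eval (a b : ℕ) :
    lamA a b = if a % 2 = 1 ∧ b % 2 = 0 ∧ a < b then 1
      else if a % 2 = 0 ∧ b % 2 = 1 ∧ b < a then -1 else 0 := by
  simp [lamA, Nat.odd_iff, Nat.even_iff]

lemma lamA_oe (a b : ℕ) (h1 : a % 2 = 1) (h2 : b % 2 = 0) (h : a < b) : lamA a b = 1 := by
  rw [lamA_eval, if_pos ⟨h1, h2, h⟩]

lemma lamA_eo (a b : ℕ) (h1 : a % 2 = 0) (h2 : b % 2 = 1) (h : a < b) : lamA a b = 0 := by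
  rw [lamA_eval, if_neg (by omega), if_neg (by omega)]

lemma lamA_same (a b : ℕ) (h : a % 2 = b % 2) : lamA a b = 0 := by
  rw [lamA_eval, if_neg (by omega), if_neg (by omega)]

lemma key_lam (i k a b : ℕ) (hi : 1 ≤ i) (hk : 2 ≤ k)
    (ha : a = i - 1 ∨ a = i + 1) (hb : b = i + k - 1 ∨ b = i + k + 1) :
    lamA i (i + k) - lamA i b - lamA a (i + k) + lamA a b = (-1 : ℤ) ^ (k - 1) := by
  have hi2 := Nat.even_or_odd i
  have hk2 := Nat.even_or_odd k
  rw [Nat.even_iff, Nat.odd_iff] at hi2 hk2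
  rcases hi2 with h1 | h1 <;> rcases hk2 with h2 | h2
  · rw [lamA_same i (i + k) (by omega), lamA_eo i b (by omega) (by omega) (by omega),
      lamA_oe a (i + k) (by omega) (by omega) (by omega), lamA_same a b (by omega),
      show (-1 : ℤ) ^ (k - 1) = -1 from Odd.neg_one_pow (by rw [Nat.odd_iff]; omega)]
    norm_num
  · rw [lamA_eo i (i + k) (by omega) (by omega) (by omega), lamA_same i b (by omega),
      lamA_same a (i + k) (by omega), lamA_oe a b (by omega) (by omega) (by omega),
      show (-1 : ℤ) ^ (k - 1) = 1 from Even.neg_one_pow (by rw [Nat.even_iff]; omega)]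
    norm_num
  · rw [lamA_same i (i + k) (by omega), lamA_oe i b (by omega) (by omega) (by omega),
      lamA_eo a (i + k) (by omega) (by omega) (by omega), lamA_same a b (by omega),
      show (-1 : ℤ) ^ (k - 1) = -1 from Odd.neg_one_pow (by rw [Nat.odd_iff]; omega)]
    norm_num
  · rw [lamA_oe i (i + k) (by omega) (by omega) (by omega), lamA_same i b (by omega),
      lamA_same a (i + k) (by omega), lamA_eo a b (by omega) (by omega) (by omega),
      show (-1 : ℤ) ^ (k - 1) = 1 from Even.neg_one_pow (by rw [Nat.even_iff]; omega)]
    norm_num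

/-- `x` and `y` `q`-commute with exponent `z`. -/
def QCom {R : Type*} [Ring R] (q : Rˣ) (z : ℤ) (x y : Rˣ) : Prop :=
  x * y = q ^ z * (y * x)

section QComLemmas

variable {R : Type*} [Ring R] {q : Rˣ} {z z' : ℤ} {x y x' y' : Rˣ}

lemma qcom_congr (h : z = z') (hx : QCom q z x y) : QCom q z' x y := h ▸ hx

lemma qcom_swap (h : QCom q z x y) : QCom q (-z) y x := by
  unfold QCom at *
  rw [h, ← mul_assoc, ← zpow_add, neg_add_cancel, zpow_zero, one_mul]

lemma qcom_central (hc : ∀ u : Rˣ, Commute x u) (y : Rˣ) : QCom q 0 x y := by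
  unfold QCom; rw [zpow_zero, one_mul]; exact (hc y).eq

lemma qcom_central' (hc : ∀ u : Rˣ, Commute y u) (x : Rˣ) : QCom q 0 x y := by
  unfold QCom; rw [zpow_zero, one_mul]; exact ((hc x).symm).eq

lemma qcom_mul_right (hq : ∀ (z : ℤ) (u : Rˣ), Commute (q ^ z) u)
    (h : QCom q z x y) (h' : QCom q z' x y') :
    QCom q (z + z') x (y * y') := by
  unfold QCom at *
  calc x * (y * y') = (x * y) * y' := (mul_assoc _ _ _).symm
    _ = q ^ z * (y * (x * y')) := by rw [h, mul_assoc, mul_assoc]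
    _ = q ^ z * (y * (q ^ z' * (y' * x))) := by rw [h']
    _ = q ^ z * (q ^ z' * (y * (y' * x))) := by
        rw [← mul_assoc y, ← (hq z' y).eq, mul_assoc]
    _ = q ^ (z + z') * (y * y' * x) := by rw [← mul_assoc, ← zpow_add, mul_assoc y]

lemma qcom_mul_left (hq : ∀ (z : ℤ) (u : Rˣ), Commute (q ^ z) u)
    (h : QCom q z x y) (h' : QCom q z' x' y) :
    QCom q (z + z') (x * x') y := by
  have h2 := qcom_swap (qcom_mul_right hq (qcom_swap h) (qcom_swap h'))
  exact qcom_congr (by ring) h2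

lemma qcom_inv_left (hq : ∀ (z : ℤ) (u : Rˣ), Commute (q ^ z) u)
    (h : QCom q z x y) : QCom q (-z) x⁻¹ y := by
  have h1 : QCom q z y x⁻¹ := by
    unfold QCom at *
    calc y * x⁻¹ = x⁻¹ * (x * y) * x⁻¹ := by rw [inv_mul_cancel_left]
      _ = x⁻¹ * (q ^ z * (y * x)) * x⁻¹ := by rw [h]
      _ = q ^ z * (x⁻¹ * y) := by
          rw [← mul_assoc x⁻¹ (q ^ z), ← (hq z x⁻¹).eq]
          simp [mul_assoc]
  exact qcom_swap h1

lemma qcom_inv_right (hq : ∀ (z : ℤ) (u : Rˣ), Commute (q ^ z) u)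
    (h : QCom q z x y) : QCom q (-z) x y⁻¹ := by
  have h2 := qcom_swap (qcom_inv_left hq (qcom_swap h))
  exact qcom_congr (by ring) h2

lemma qcom_monomial {ν Ya Yb Ya' Yb' : Rˣ} {z1 z2 z3 z4 : ℤ}
    (hq : ∀ (z : ℤ) (u : Rˣ), Commute (q ^ z) u) (hν : ∀ u : Rˣ, Commute ν u)
    (t t' : ℤ)
    (h1 : QCom q z1 Ya Ya') (h2 : QCom q z2 Ya Yb')
    (h3 : QCom q z3 Yb Ya') (h4 : QCom q z4 Yb Yb') :
    QCom q (z1 - z2 - z3 + z4) (ν ^ t * Ya⁻¹ * Yb) (ν ^ t' * Ya'⁻¹ * Yb') := by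
  have c1 : QCom q z1 Ya⁻¹ Ya'⁻¹ :=
    qcom_congr (by ring) (qcom_inv_right hq (qcom_inv_left hq h1))
  have c2 : QCom q (-z2) Ya⁻¹ Yb' := qcom_inv_left hq h2
  have c3 : QCom q (-z3) Yb Ya'⁻¹ := qcom_inv_right hq h3
  have cA : QCom q ((z1 + -z2) + (-z3 + z4)) (Ya⁻¹ * Yb) (Ya'⁻¹ * Yb') :=
    qcom_mul_left hq (qcom_mul_right hq c1 c2) (qcom_mul_right hq c3 h4)
  have hνt : ∀ u : Rˣ, Commute (ν ^ t) u := fun u => (hν u).zpow_left t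
  have hνt' : ∀ u : Rˣ, Commute (ν ^ t') u := fun u => (hν u).zpow_left t'
  have cB : QCom q (0 + ((z1 + -z2) + (-z3 + z4))) (ν ^ t * (Ya⁻¹ * Yb)) (Ya'⁻¹ * Yb') :=
    qcom_mul_left hq (qcom_central hνt _) cA
  have cC : QCom q (0 + (0 + ((z1 + -z2) + (-z3 + z4))))
      (ν ^ t * (Ya⁻¹ * Yb)) (ν ^ t' * (Ya'⁻¹ * Yb')) :=
    qcom_mul_right hq (qcom_central' hνt' _) cB
  rw [mul_assoc (ν ^ t) Ya⁻¹ Yb, mul_assoc (ν ^ t') Ya'⁻¹ Yb']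
  exact qcom_congr (by ring) cC

lemma qcom_coe (h : QCom q z x y) :
    (x : R) * (y : R) = ((q ^ z : Rˣ) : R) * ((y : R) * (x : R)) := by
  have h2 := congrArg (Units.val) h
  simpa only [Units.val_mul] using h2

end QComLemmas

theorem aux_comm {R : Type*} [Ring R] (ν : Rˣ) (hνc : ∀ u : Rˣ, Commute ν u)
    (n : ℕ) (Yt : ℕ → Rˣ)
    (hbase : ∀ a b, a ≤ n + 1 → b ≤ n + 1 → QCom (ν ^ 2) (lamA a b) (Yt a) (Yt b))
    (i k : ℕ) (hi : 1 ≤ i) (hk : 1 < k) (hik : i + k ≤ n) :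
    ((((ν ^ lamA i (i - 1) * (Yt i)⁻¹ * Yt (i - 1) : Rˣ) : R)
        + ((ν ^ lamA i (i + 1) * (Yt i)⁻¹ * Yt (i + 1) : Rˣ) : R))
      * (((ν ^ lamA (i + k) (i + k - 1) * (Yt (i + k))⁻¹ * Yt (i + k - 1) : Rˣ) : R)
        + ((ν ^ lamA (i + k) (i + k + 1) * (Yt (i + k))⁻¹ * Yt (i + k + 1) : Rˣ) : R)))
    = (((ν ^ 2 : Rˣ) ^ ((-1 : ℤ) ^ (k - 1)) : Rˣ) : R)
      * ((((ν ^ lamA (i + k) (i + k - 1) * (Yt (i + k))⁻¹ * Yt (i + k - 1) : Rˣ) : R)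
        + ((ν ^ lamA (i + k) (i + k + 1) * (Yt (i + k))⁻¹ * Yt (i + k + 1) : Rˣ) : R))
        * ((((ν ^ lamA i (i - 1) * (Yt i)⁻¹ * Yt (i - 1) : Rˣ)) : R)
        + ((ν ^ lamA i (i + 1) * (Yt i)⁻¹ * Yt (i + 1) : Rˣ) : R))) := by
  have hq : ∀ (z : ℤ) (u : Rˣ), Commute ((ν ^ 2) ^ z) u :=
    fun z u => ((hνc u).pow_left 2).zpow_left z
  have hmain : ∀ a b : ℕ, (a = i - 1 ∨ a = i + 1) → (b = i + k - 1 ∨ b = i + k + 1) →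
      QCom (ν ^ 2) ((-1 : ℤ) ^ (k - 1))
        (ν ^ lamA i a * (Yt i)⁻¹ * Yt a)
        (ν ^ lamA (i + k) b * (Yt (i + k))⁻¹ * Yt b) := by
    intro a b ha hb
    refine qcom_congr (key_lam i k a b hi hk ha hb) ?_
    exact qcom_monomial hq hνc _ _ (hbase i (i + k) (by omega) (by omega))
      (hbase i b (by omega) (by omega)) (hbase a (i + k) (by omega) (by omega))
      (hbase a b (by omega) (by omega))
  have h11 := qcom_coe (hmain (i - 1) (i + k - 1) (Or.inl rfl) (Or.inl rfl))
  have h12 := qcom_coe (hmain (i - 1) (i + k + 1) (Or.inl rfl) (Or.inr rfl))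
  have h21 := qcom_coe (hmain (i + 1) (i + k - 1) (Or.inr rfl) (Or.inl rfl))
  have h22 := qcom_coe (hmain (i + 1) (i + k + 1) (Or.inr rfl) (Or.inr rfl))
  simp only [add_mul, mul_add]
  rw [h11, h12, h21, h22]
  abel

theorem nonadjacent_mutated_variables_q_commute
    (n : ℕ) (hn : 2 ≤ n) (hneven : Even n)
    (R : Type*) [Ring R] (ν : Rˣ) (hcen : ∀ r : R, (ν : R) * r = r * (ν : R))
    (Y : ℕ → Rˣ)
    (hY : ∀ i j, 1 ≤ i → i ≤ n → 1 ≤ j → j ≤ n →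
      (Y i : R) * (Y j : R) =
        (((ν ^ 2 : Rˣ) ^ (lamA i j) : Rˣ) : R) * ((Y j : R) * (Y i : R)))
    (X' : ℕ → R)
    (hX1 : X' 1 = (((Y 1)⁻¹ : Rˣ) : R) + (ν : R) * (((Y 1)⁻¹ : Rˣ) : R) * (Y 2 : R))
    (hXn : X' n = ((ν⁻¹ : Rˣ) : R) * (((Y n)⁻¹ : Rˣ) : R) * (Y (n - 1) : R)
      + (((Y n)⁻¹ : Rˣ) : R))
    (hXmid : ∀ i, 1 < i → i < n →
      X' i = (((ν ^ (lamA i (i - 1)) : Rˣ)) : R) * (((Y i)⁻¹ : Rˣ) : R) * (Y (i - 1) : R)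
        + (((ν ^ (lamA i (i + 1)) : Rˣ)) : R) * (((Y i)⁻¹ : Rˣ) : R) * (Y (i + 1) : R)) :
    ∀ i k, 1 ≤ i → 1 < k → k ≤ n - i →
      X' i * X' (i + k) =
        (((ν ^ 2 : Rˣ) ^ ((-1 : ℤ) ^ (k - 1)) : Rˣ) : R) * (X' (i + k) * X' i) := by
  intro i k hi hk hkn
  have hik : i + k ≤ n := by omega
  have hn2 : n % 2 = 0 := Nat.even_iff.mp hneven
  have hνc : ∀ u : Rˣ, Commute ν u := fun u => Units.ext (by simpa using hcen u)
  set Yt : ℕ → Rˣ := fun m => if 1 ≤ m ∧ m ≤ n then Y m else 1 with hYtdef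
  have hYt1 : ∀ m, 1 ≤ m → m ≤ n → Yt m = Y m := by
    intro m h1 h2; simp only [hYtdef]; rw [if_pos ⟨h1, h2⟩]
  have hYt0 : ∀ m, ¬(1 ≤ m ∧ m ≤ n) → Yt m = 1 := by
    intro m h; simp only [hYtdef]; rw [if_neg h]
  have hbase : ∀ a b, a ≤ n + 1 → b ≤ n + 1 → QCom (ν ^ 2) (lamA a b) (Yt a) (Yt b) := by
    intro a b ha hb
    by_cases hA : 1 ≤ a ∧ a ≤ n
    · by_cases hB : 1 ≤ b ∧ b ≤ n
      · rw [hYt1 a hA.1 hA.2, hYt1 b hB.1 hB.2]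
        exact Units.ext (by simpa only [Units.val_mul] using hY a b hA.1 hA.2 hB.1 hB.2)
      · have hb0 : lamA a b = 0 := by rw [lamA_eval]; split_ifs <;> omega
        rw [hb0, hYt0 b hB]
        unfold QCom; simp
    · have ha0 : lamA a b = 0 := by rw [lamA_eval]; split_ifs <;> omega
      rw [ha0, hYt0 a hA]
      unfold QCom; simp
  have hXgen : ∀ m, 1 ≤ m → m ≤ n → X' m =
      ((ν ^ lamA m (m - 1) * (Yt m)⁻¹ * Yt (m - 1) : Rˣ) : R)
      + ((ν ^ lamA m (m + 1) * (Yt m)⁻¹ * Yt (m + 1) : Rˣ) : R) := by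
    intro m h1 h2
    by_cases hm1 : m = 1
    · subst hm1
      have l1 : lamA 1 (1 - 1) = 0 := by decide
      have l2 : lamA 1 (1 + 1) = 1 := by decide
      rw [hX1, l1, l2, hYt1 1 le_rfl h2, hYt1 (1 + 1) (by omega) (by omega),
        hYt0 (1 - 1) (by omega)]
      simp [Units.val_mul]
    · by_cases hmn : m = n
      · have l1 : lamA n (n - 1) = -1 := by rw [lamA_eval]; split_ifs <;> omega
        have l2 : lamA n (n + 1) = 0 := by rw [lamA_eval]; split_ifs <;> omega
        rw [hmn, hXn, l1, l2, hYt1 n (by omega) le_rfl, hYt1 (n - 1) (by omega) (by omega),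
          hYt0 (n + 1) (by omega)]
        simp [Units.val_mul, zpow_neg, zpow_one]
      · rw [hXmid m (by omega) (by omega), hYt1 m h1 h2,
          hYt1 (m - 1) (by omega) (by omega), hYt1 (m + 1) (by omega) (by omega)]
        simp [Units.val_mul]
  rw [hXgen i hi (by omega), hXgen (i + k) (by omega) hik]
  exact aux_comm ν hνc n Yt hbase i k hi hk hik
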